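/- If 𝒯' is the least generating set of an E-closed family 𝒯 and A, B ⊆ 𝒯', then Cl_E(A) ⊆ Cl_E(B) if and only if A ⊆ B. -/
import Mathlib


open Set

variable {σ : Type*}

/-- For a family 𝒯 of theories (sets of sentences) and a sentence φ,
`Tphi 𝒯 φ` is the set 𝒯_φ = {T ∈ 𝒯 | φ ∈ T}. -/
def Tphi (𝒯 : Set (Set σ)) (φ : σ) : Set (Set σ) := {T ∈ 𝒯 | φ ∈ T}

/-- E-closure relative to the ambient set `S` of all complete theories:
`ClE S 𝒯 = 𝒯 ∪ {T ∈ S | ∀ φ ∈ T, 𝒯_φ is infinite}`. -/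
def ClE (S 𝒯 : Set (Set σ)) : Set (Set σ) :=
  𝒯 ∪ {T ∈ S | ∀ φ ∈ T, (Tphi 𝒯 φ).Infinite}

/-- 𝒯 is E-closed if it equals its own E-closure. -/
def EClosed (S 𝒯 : Set (Set σ)) : Prop := ClE S 𝒯 = 𝒯

/-- `𝒯'` is a generating set for `𝒯`. -/
def Generates (S 𝒯' 𝒯 : Set (Set σ)) : Prop := 𝒯' ⊆ 𝒯 ∧ ClE S 𝒯' = 𝒯

/-- `𝒯'` is the least generating set for `𝒯`. -/
def IsLeastGen (S 𝒯' 𝒯 : Set (Set σ)) : Prop :=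
  Generates S 𝒯' 𝒯 ∧ ∀ 𝒯'', Generates S 𝒯'' 𝒯 → 𝒯' ⊆ 𝒯''

/-- `T` is an isolated point of `𝒯`: some sentence φ ∈ T has 𝒯_φ = {T}. -/
def IsolatedIn (𝒯 : Set (Set σ)) (T : Set σ) : Prop := ∃ φ ∈ T, Tphi 𝒯 φ = {T}

/-- The meet operation ∧′: E-closure of the set of isolated points of 𝒯₁ ∩ 𝒯₂. -/
def meetI (S 𝒯₁ 𝒯₂ : Set (Set σ)) : Set (Set σ) :=
  ClE S {T ∈ 𝒯₁ ∩ 𝒯₂ | IsolatedIn (𝒯₁ ∩ 𝒯₂) T}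

lemma tphi_mono' {σ : Type*} {X Y : Set (Set σ)} (h : X ⊆ Y) (φ : σ) :
    Tphi X φ ⊆ Tphi Y φ := fun T hT => ⟨h hT.1, hT.2⟩

/-- Every member of the least generating set has a "finitely supported" sentence. -/
lemma key_finite {σ : Type*} (S 𝒯 𝒯' : Set (Set σ)) (h𝒯S : 𝒯 ⊆ S)
    (hcl : EClosed S 𝒯) (hg : IsLeastGen S 𝒯' 𝒯) :
    ∀ T ∈ 𝒯', ∃ φ ∈ T, (Tphi 𝒯' φ).Finite := by
  intro T hT
  by_contra h
  push_neg at h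
  have hTcl : T ∈ ClE S (𝒯' \ {T}) := by
    refine Or.inr ⟨h𝒯S (hg.1.1 hT), fun φ hφ => ?_⟩
    have hinf : (Tphi 𝒯' φ).Infinite := h φ hφ
    have hsub : Tphi 𝒯' φ \ {T} ⊆ Tphi (𝒯' \ {T}) φ :=
      fun U hU => ⟨⟨hU.1.1, hU.2⟩, hU.1.2⟩
    exact (hinf.diff (Set.finite_singleton T)).mono hsub
  have hgen : Generates S (𝒯' \ {T}) 𝒯 := by
    constructor
    · exact Set.diff_subset.trans hg.1.1
    · apply Set.Subset.antisymm
      · intro U hU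
        have hU' : U ∈ ClE S 𝒯 := by
          rcases hU with hU | hU
          · exact Or.inl (hg.1.1 hU.1)
          · exact Or.inr ⟨hU.1, fun φ hφ =>
              (hU.2 φ hφ).mono (tphi_mono' (Set.diff_subset.trans hg.1.1) φ)⟩
        rwa [hcl] at hU'
      · intro U hU
        rw [← hg.1.2] at hU
        rcases hU with hU | hU
        · by_cases hUT : U = T
          · subst hUT; exact hTcl
          · exact Or.inl ⟨hU, hUT⟩
        · refine Or.inr ⟨hU.1, fun φ hφ => ?_⟩
          exact ((hU.2 φ hφ).diff (Set.finite_singleton T)).mono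
            (fun V hV => ⟨⟨hV.1.1, hV.2⟩, hV.1.2⟩)
  exact (hg.2 _ hgen hT).2 rfl

/-- For subsets A, B of the least generating set 𝒯' of an E-closed 𝒯,
Cl_E(A) ⊆ Cl_E(B) iff A ⊆ B. -/
theorem clE_subset_iff {σ : Type*} (S 𝒯 𝒯' : Set (Set σ))
    (hS : ∀ T ∈ S, T.Nonempty) (h𝒯S : 𝒯 ⊆ S)
    (hcl : EClosed S 𝒯) (hg : IsLeastGen S 𝒯' 𝒯)
    (A B : Set (Set σ)) (hA : A ⊆ 𝒯') (hB : B ⊆ 𝒯') :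
    ClE S A ⊆ ClE S B ↔ A ⊆ B := by
  constructor
  · intro h T hT
    have hTB : T ∈ ClE S B := h (Or.inl hT)
    rcases hTB with h' | h'
    · exact h'
    · obtain ⟨φ, hφT, hfin⟩ := key_finite S 𝒯 𝒯' h𝒯S hcl hg T (hA hT)
      exact absurd (h'.2 φ hφT) ((hfin.subset (tphi_mono' hB φ)).not_infinite)
  · intro h U hU
    rcases hU with h' | h'
    · exact Or.inl (h h')
    · exact Or.inr ⟨h'.1, fun φ hφ => (h'.2 φ hφ).mono (tphi_mono' h φ)⟩
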